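/- Let A ∈ ℝ^{n×n} be symmetric positive-definite and let (M_i), (R_i), (G_i), (P_i) be the NCG iterates started from M_0 ∈ ℝ^{n×n}. Then for every i ≥ 0 the residuals are orthogonal to all previous gradient directions: (R_{i+1}, G_j)_F = 0 for all j = 0, 1, …, i. -/

import Mathlib

open Matrix

/-- Frobenius inner product `(X,Y)_F = trace (Xᵀ Y)`. -/
noncomputable def finner {n : ℕ} (X Y : Matrix (Fin n) (Fin n) ℝ) : ℝ :=
  (Xᵀ * Y).trace

/-- Frobenius norm `‖X‖_F`. -/
noncomputable def fnorm {n : ℕ} (X : Matrix (Fin n) (Fin n) ℝ) : ℝ :=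
  Real.sqrt (finner X X)

/-- A-weighted Frobenius inner product `(X,Y)_{F,A} = trace (Xᵀ A Y)`. -/
noncomputable def finnerA {n : ℕ} (A X Y : Matrix (Fin n) (Fin n) ℝ) : ℝ :=
  (Xᵀ * A * Y).trace

/-- A-weighted Frobenius norm `‖X‖_{F,A}`. -/
noncomputable def fnormA {n : ℕ} (A X : Matrix (Fin n) (Fin n) ℝ) : ℝ :=
  Real.sqrt (finnerA A X X)

/-- Krylov subspace `K_i(B, X) = span {X, BX, …, B^(i-1) X}`. -/
noncomputable def krylov {n : ℕ} (i : ℕ) (B X : Matrix (Fin n) (Fin n) ℝ) :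
    Submodule ℝ (Matrix (Fin n) (Fin n) ℝ) :=
  Submodule.span ℝ {Y | ∃ j < i, Y = B ^ j * X}

/-- NCG residuals are orthogonal to all previous gradient directions. -/
theorem ncg_residual_orth_gradients {n : ℕ}
    (A : Matrix (Fin n) (Fin n) ℝ) (hA : A.PosDef)
    (M R G P : ℕ → Matrix (Fin n) (Fin n) ℝ)
    (hR : ∀ i, R i = 1 - A * M i)
    (hG : ∀ i, G i = -(A * R i))
    (hP0 : P 0 = -G 0)
    (hM : ∀ i, M (i + 1) =
      M i + (-(finner (R i) (G i)) / finner (P i) (A * P i)) • P i)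
    (hP : ∀ i, P (i + 1) =
      -G (i + 1) + (finner (R (i + 1)) (G (i + 1)) / finner (R i) (G i)) • P i)
    (hPA : ∀ j, finner (P j) (A * P j) ≠ 0)
    (hRG : ∀ j, finner (R j) (G j) ≠ 0)
    : ∀ i : ℕ, ∀ j ≤ i, finner (R (i + 1)) (G j) = 0 := by
    classical
  -- A is symmetric
  have hAt : Aᵀ = A := by
    have h := hA.isHermitian
    simpa [Matrix.IsHermitian, Matrix.conjTranspose_eq_transpose_of_trivial] using h
  -- bilinearity lemmas for finner
  have fadd_l : ∀ X Y Z : Matrix (Fin n) (Fin n) ℝ,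
      finner (X + Y) Z = finner X Z + finner Y Z := by
    intro X Y Z; simp [finner, Matrix.transpose_add, Matrix.add_mul]
  have fsub_l : ∀ X Y Z : Matrix (Fin n) (Fin n) ℝ,
      finner (X - Y) Z = finner X Z - finner Y Z := by
    intro X Y Z; simp [finner, Matrix.transpose_sub, Matrix.sub_mul]
  have fsmul_l : ∀ (c : ℝ) (X Y : Matrix (Fin n) (Fin n) ℝ),
      finner (c • X) Y = c * finner X Y := by
    intro c X Y; simp [finner, Matrix.transpose_smul, Matrix.smul_mul]
  have fsub_r : ∀ X Y Z : Matrix (Fin n) (Fin n) ℝ,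
      finner X (Y - Z) = finner X Y - finner X Z := by
    intro X Y Z; simp [finner, Matrix.mul_sub]
  have fsmul_r : ∀ (c : ℝ) (X Y : Matrix (Fin n) (Fin n) ℝ),
      finner X (c • Y) = c * finner X Y := by
    intro c X Y; simp [finner, Matrix.mul_smul]
  have fneg_r : ∀ X Y : Matrix (Fin n) (Fin n) ℝ,
      finner X (-Y) = -finner X Y := by
    intro X Y; simp [finner, Matrix.mul_neg]
  have fshift : ∀ X Y : Matrix (Fin n) (Fin n) ℝ,
      finner (A * X) Y = finner X (A * Y) := by
    intro X Y
    simp [finner, Matrix.transpose_mul, hAt, Matrix.mul_assoc]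
  -- nonvanishing of diagonal quantities
  have pp_ne : ∀ j, finner (P j) (A * P j) ≠ 0 := hPA
  have rr_ne : ∀ j, finner (R j) (A * R j) ≠ 0 := by
    intro j
    have h := hRG j
    rw [hG j, fneg_r] at h
    intro h0; exact h (by rw [h0, neg_zero])
  -- the residual recurrence
  have hRrec : ∀ i, R (i + 1) = R i
      - (finner (R i) (A * R i) / finner (P i) (A * P i)) • (A * P i) := by
    intro i
    have hc : -(finner (R i) (G i)) = finner (R i) (A * R i) := by
      rw [hG i, fneg_r, neg_neg]
    rw [hR (i + 1), hM i, Matrix.mul_add, Matrix.mul_smul, hc,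
      sub_add_eq_sub_sub, ← hR i]
  -- P 0 relation
  have hP00 : A * R 0 = P 0 := by rw [hP0, hG 0, neg_neg]
  -- direction recurrence, rewritten
  have hPrec : ∀ i, A * R (i + 1) = P (i + 1)
      - (finner (R (i + 1)) (A * R (i + 1)) / finner (R i) (A * R i)) • P i := by
    intro i
    have hb : finner (R (i + 1)) (G (i + 1)) / finner (R i) (G i)
        = finner (R (i + 1)) (A * R (i + 1)) / finner (R i) (A * R i) := by
      rw [hG (i + 1), hG i, fneg_r, fneg_r, neg_div_neg_eq]
    have h := hP i
    rw [hb, hG (i + 1), neg_neg] at h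
    rw [h]
    abel
  -- A * P j expressed by residuals
  have hAP : ∀ j, A * P j = (finner (P j) (A * P j) / finner (R j) (A * R j))
      • (R j - R (j + 1)) := by
    intro j
    have h1 : R j - R (j + 1)
        = (finner (R j) (A * R j) / finner (P j) (A * P j)) • (A * P j) := by
      rw [hRrec j, sub_sub_cancel]
    rw [h1, smul_smul]
    have : finner (P j) (A * P j) / finner (R j) (A * R j)
        * (finner (R j) (A * R j) / finner (P j) (A * P j)) = 1 := by
      rw [div_mul_div_comm, mul_comm (finner (R j) (A * R j)),
        div_self (mul_ne_zero (pp_ne j) (rr_ne j))]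
    rw [this, one_smul]
  -- the key joint induction: residual orthogonality and conjugacy
  have key : ∀ i, ∀ j < i,
      finner (R i) (A * R j) = 0 ∧ finner (P i) (A * P j) = 0 := by
    intro i
    induction i using Nat.strong_induction_on with
    | _ i ih =>
      match i with
      | 0 => intro j hj; exact absurd hj (Nat.not_lt_zero j)
      | (m + 1) =>
        -- first: residual orthogonality at level m+1
        have Hor : ∀ j, j ≤ m → finner (R (m + 1)) (A * R j) = 0 := by
          intro j hj
          rw [hRrec m, fsub_l, fsmul_l, fshift]
          rcases eq_or_lt_of_le hj with hjm | hjm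
          · -- diagonal case j = m
            subst hjm
            have h2 : finner (P j) (A * (A * R j)) = finner (P j) (A * P j) := by
              match j with
              | 0 => rw [hP00]
              | (k + 1) =>
                rw [hPrec k, Matrix.mul_sub, Matrix.mul_smul, fsub_r, fsmul_r]
                have hc : finner (P (k + 1)) (A * P k) = 0 :=
                  (ih (k + 1) (Nat.lt_succ_self _) k (Nat.lt_succ_self _)).2
                rw [hc]; ring
            rw [h2, div_mul_cancel₀ _ (pp_ne j), sub_self]
          · -- off-diagonal case j < m
            have h1 : finner (R m) (A * R j) = 0 :=
              (ih m (Nat.lt_succ_self _) j hjm).1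
            have h2 : finner (P m) (A * (A * R j)) = 0 := by
              match j, hjm with
              | 0, hjm =>
                rw [hP00]
                exact (ih m (Nat.lt_succ_self _) 0 hjm).2
              | (k + 1), hjm =>
                rw [hPrec k, Matrix.mul_sub, Matrix.mul_smul, fsub_r, fsmul_r,
                  (ih m (Nat.lt_succ_self _) (k + 1) hjm).2,
                  (ih m (Nat.lt_succ_self _) k (Nat.lt_of_succ_lt hjm)).2]
                ring
            rw [h1, h2]; ring
        -- second: conjugacy at level m+1
        have Hoc : ∀ j, j ≤ m → finner (P (m + 1)) (A * P j) = 0 := by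
          intro j hj
          have hPsum : P (m + 1) = A * R (m + 1)
              + (finner (R (m + 1)) (A * R (m + 1)) / finner (R m) (A * R m))
                • P m := by
            have h := hPrec m
            rw [eq_comm, sub_eq_iff_eq_add] at h
            rw [h]
          have e1 : finner (R (m + 1)) (A * (A * P j))
              = (finner (P j) (A * P j) / finner (R j) (A * R j))
                * (finner (R (m + 1)) (A * R j)
                  - finner (R (m + 1)) (A * R (j + 1))) := by
            conv_lhs => rw [hAP j]
            rw [Matrix.mul_smul, Matrix.mul_sub, fsmul_r, fsub_r]
          rw [hPsum, fadd_l, fsmul_l, fshift, e1]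
          rcases eq_or_lt_of_le hj with hjm | hjm
          · subst hjm
            rw [Hor j le_rfl]
            field_simp [rr_ne j]
            ring
          · rw [Hor j (Nat.le_of_lt hjm), Hor (j + 1) hjm,
              (ih m (Nat.lt_succ_self _) j hjm).2]
            ring
        intro j hj
        exact ⟨Hor j (Nat.lt_succ_iff.mp hj), Hoc j (Nat.lt_succ_iff.mp hj)⟩
  intro i j hj
  rw [hG j, fneg_r, neg_eq_zero]
  exact (key (i + 1) j (Nat.lt_succ_of_le hj)).1
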